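/- Let N \ge 2 and \nu \ge 1 be integers, let s_\nu = (4/(N(2+\nu)))^{1/(\nu+4)} be the Silverman bandwidth and \hat{s}_\nu = s_\nu / \sqrt{s_\nu^2 + (N-1)/N}. Let \eta^{d,1},...,\eta^{d,N} be vectors in R^\nu with empirical mean zero and empirical covariance [c'] = (1/(N-1)) \sum_{j=1}^N \eta^{d,j}(\eta^{d,j})^T equal to I_\nu, and let p_H be the modified Gaussian kernel-density estimate built from these data with parameters s_\nu, \hat{s}_\nu. Then \int_{R^\nu} \eta \eta^T p_H(\eta) d\eta = I_\nu. -/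

import Mathlib

open MeasureTheory Real Finset Matrix

open Filter


lemma L0 {b : ℝ} (m : ℝ) :
    ∫ x : ℝ, Real.exp (-b * (x - m)^2) = ∫ x : ℝ, Real.exp (-b * x^2) := by
  rw [integral_sub_right_eq_self (fun x => Real.exp (-b * x^2)) m]

lemma Lodd (b : ℝ) : ∫ x : ℝ, x * Real.exp (-b * x^2) = 0 := by
  have h := integral_neg_eq_self (fun x : ℝ => x * Real.exp (-b * x^2)) (volume : Measure ℝ)
  simp only [neg_sq, neg_mul, integral_neg] at h ⊢
  linarith

lemma tend_top {b : ℝ} (hb : 0 < b) :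
    Tendsto (fun x : ℝ => x * Real.exp (-b * x^2)) atTop (nhds 0) := by
  have h1 := tendsto_rpow_mul_exp_neg_mul_atTop_nhds_zero ((1:ℝ)/2) b hb
  have h2 : Tendsto (fun x : ℝ => x^2) atTop atTop := by
    exact tendsto_pow_atTop (by norm_num)
  have h3 := h1.comp h2
  refine h3.congr' ?_
  filter_upwards [eventually_ge_atTop (0:ℝ)] with x hx
  simp only [Function.comp]
  rw [← Real.sqrt_eq_rpow, Real.sqrt_sq_eq_abs, abs_of_nonneg hx]

lemma tend_bot {b : ℝ} (hb : 0 < b) :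
    Tendsto (fun x : ℝ => x * Real.exp (-b * x^2)) atBot (nhds 0) := by
  have h := ((tend_top hb).comp tendsto_neg_atBot_atTop).neg
  simp only [neg_zero] at h
  refine h.congr fun x => ?_
  simp only [Function.comp]
  ring_nf

lemma Lsq {b : ℝ} (hb : 0 < b) :
    ∫ x : ℝ, x^2 * Real.exp (-b * x^2) = Real.sqrt (π / b) / (2*b) := by
  set g : ℝ → ℝ := fun x => x * Real.exp (-b * x^2) with hg
  have hderiv : ∀ x : ℝ, HasDerivAt g (Real.exp (-b*x^2) - 2*b*(x^2 * Real.exp (-b*x^2))) x := by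
    intro x
    have h1 : HasDerivAt (fun x : ℝ => -b * x^2) (-b * (2*x)) x := by
      simpa using ((hasDerivAt_pow 2 x).const_mul (-b))
    have h2 := (h1.exp)
    have h3 : HasDerivAt g (1 * rexp (-b * x ^ 2) + x * (rexp (-b * x ^ 2) * (-b * (2 * x)))) x :=
      (hasDerivAt_id x).mul h2
    convert h3 using 1
    ring
  have hi0 : Integrable (fun x : ℝ => Real.exp (-b*x^2)) := integrable_exp_neg_mul_sq hb
  have hi2 : Integrable (fun x : ℝ => x^2 * Real.exp (-b*x^2)) := by
    have h := integrable_rpow_mul_exp_neg_mul_sq hb (s := 2) (by norm_num)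
    have h22 : ∀ x : ℝ, x ^ (2:ℝ) = x ^ 2 := fun x => by
      rw [show (2:ℝ) = ((2:ℕ):ℝ) by norm_num, Real.rpow_natCast]
    simpa only [h22] using h
  have hint : Integrable (fun x : ℝ => Real.exp (-b*x^2) - 2*b*(x^2 * Real.exp (-b*x^2))) :=
    hi0.sub ((hi2.const_mul (2*b)))
  have htop : ∫ x in Set.Ioi (0:ℝ), (Real.exp (-b*x^2) - 2*b*(x^2 * Real.exp (-b*x^2))) = 0 - g 0 :=
    integral_Ioi_of_hasDerivAt_of_tendsto' (fun x _ => hderiv x) hint.integrableOn (tend_top hb)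
  have hbot : ∫ x in Set.Iic (0:ℝ), (Real.exp (-b*x^2) - 2*b*(x^2 * Real.exp (-b*x^2))) = g 0 - 0 :=
    integral_Iic_of_hasDerivAt_of_tendsto' (fun x _ => hderiv x) hint.integrableOn (tend_bot hb)
  have hsplit := integral_add_compl (measurableSet_Iic (a := (0:ℝ))) hint
  rw [Set.compl_Iic] at hsplit
  have hg0 : g 0 = 0 := by simp [hg]
  have htot : ∫ x : ℝ, (Real.exp (-b*x^2) - 2*b*(x^2 * Real.exp (-b*x^2))) = 0 := by
    rw [← hsplit, htop, hbot, hg0]; ring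
  rw [integral_sub hi0 (hi2.const_mul (2*b)), integral_const_mul, integral_gaussian] at htot
  have h2b : (2*b) ≠ 0 := by positivity
  field_simp at htot ⊢
  linarith

-- integrability of shifted moments
lemma I0 {b : ℝ} (hb : 0 < b) (m : ℝ) :
    Integrable (fun x : ℝ => Real.exp (-b * (m - x)^2)) := by
  have := (integrable_exp_neg_mul_sq hb).comp_sub_right m
  refine this.congr (Filter.Eventually.of_forall fun x => ?_)
  simp only
  rw [show (x - m)^2 = (m - x)^2 by ring]

lemma Ipoly {b : ℝ} (hb : 0 < b) (m : ℝ) (c0 c1 c2 : ℝ) :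
    Integrable (fun x : ℝ => (c0 + c1 * x + c2 * x^2) * Real.exp (-b * (m - x)^2)) := by
  have h : (fun x : ℝ => (c0 + c1 * x + c2 * x^2) * Real.exp (-b * (m - x)^2))
      = fun x => (fun y : ℝ => (c0 + c1 * (y + m) + c2 * (y + m)^2) * Real.exp (-b * y^2)) (x - m) := by
    funext x
    simp only
    rw [show (m - x)^2 = (x - m)^2 by ring, sub_add_cancel]
  have hi0 : Integrable (fun y : ℝ => Real.exp (-b*y^2)) := integrable_exp_neg_mul_sq hb
  have hi1 : Integrable (fun y : ℝ => y * Real.exp (-b*y^2)) := integrable_mul_exp_neg_mul_sq hb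
  have hi2 : Integrable (fun y : ℝ => y^2 * Real.exp (-b*y^2)) := by
    have h := integrable_rpow_mul_exp_neg_mul_sq hb (s := 2) (by norm_num)
    have h22 : ∀ x : ℝ, x ^ (2:ℝ) = x ^ 2 := fun x => by
      rw [show (2:ℝ) = ((2:ℕ):ℝ) by norm_num, Real.rpow_natCast]
    simpa only [h22] using h
  have hsum : Integrable (fun y : ℝ => (c0 + c1*m + c2*m^2) * Real.exp (-b*y^2)
      + (c1 + 2*c2*m) * (y * Real.exp (-b*y^2)) + c2 * (y^2 * Real.exp (-b*y^2))) :=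
    ((hi0.const_mul _).add (hi1.const_mul _)).add (hi2.const_mul _)
  have hF : Integrable (fun y : ℝ => (c0 + c1 * (y + m) + c2 * (y + m)^2) * Real.exp (-b * y^2)) := by
    refine hsum.congr (Filter.Eventually.of_forall fun y => ?_)
    simp only
    ring
  rw [h]
  exact hF.comp_sub_right m

-- shifted moment values
lemma M1 {b : ℝ} (hb : 0 < b) (m : ℝ) :
    ∫ x : ℝ, x * Real.exp (-b * (m - x)^2) = m * Real.sqrt (π / b) := by
  have h : (fun x : ℝ => x * Real.exp (-b * (m - x)^2))
      = fun x => (fun y : ℝ => (y + m) * Real.exp (-b * y^2)) (x - m) := by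
    funext x; simp only
    rw [show (m - x)^2 = (x - m)^2 by ring, sub_add_cancel]
  rw [h, integral_sub_right_eq_self (fun y : ℝ => (y + m) * Real.exp (-b * y^2)) m]
  have hi0 : Integrable (fun y : ℝ => Real.exp (-b*y^2)) := integrable_exp_neg_mul_sq hb
  have hi1 : Integrable (fun y : ℝ => y * Real.exp (-b*y^2)) := integrable_mul_exp_neg_mul_sq hb
  have h2 : (fun y : ℝ => (y + m) * Real.exp (-b * y^2))
      = fun y => y * Real.exp (-b*y^2) + m * Real.exp (-b*y^2) := by funext y; ring
  rw [h2, integral_add hi1 (hi0.const_mul m), Lodd, integral_const_mul, integral_gaussian]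
  ring

lemma M2 {b : ℝ} (hb : 0 < b) (m : ℝ) :
    ∫ x : ℝ, x^2 * Real.exp (-b * (m - x)^2) = (m^2 + 1/(2*b)) * Real.sqrt (π / b) := by
  have h : (fun x : ℝ => x^2 * Real.exp (-b * (m - x)^2))
      = fun x => (fun y : ℝ => (y + m)^2 * Real.exp (-b * y^2)) (x - m) := by
    funext x; simp only
    rw [show (m - x)^2 = (x - m)^2 by ring, sub_add_cancel]
  rw [h, integral_sub_right_eq_self (fun y : ℝ => (y + m)^2 * Real.exp (-b * y^2)) m]
  have hi0 : Integrable (fun y : ℝ => Real.exp (-b*y^2)) := integrable_exp_neg_mul_sq hb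
  have hi1 : Integrable (fun y : ℝ => y * Real.exp (-b*y^2)) := integrable_mul_exp_neg_mul_sq hb
  have hi2 : Integrable (fun y : ℝ => y^2 * Real.exp (-b*y^2)) := by
    have h := integrable_rpow_mul_exp_neg_mul_sq hb (s := 2) (by norm_num)
    have h22 : ∀ x : ℝ, x ^ (2:ℝ) = x ^ 2 := fun x => by
      rw [show (2:ℝ) = ((2:ℕ):ℝ) by norm_num, Real.rpow_natCast]
    simpa only [h22] using h
  have h2 : (fun y : ℝ => (y + m)^2 * Real.exp (-b * y^2))
      = fun y => y^2 * Real.exp (-b*y^2) + ((2*m) * (y * Real.exp (-b*y^2)) + m^2 * Real.exp (-b*y^2)) := by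
    funext y; ring
  have hsum : Integrable (fun y : ℝ => (2*m) * (y * Real.exp (-b*y^2)) + m^2 * Real.exp (-b*y^2)) :=
    (hi1.const_mul _).add (hi0.const_mul _)
  rw [h2, integral_add hi2 hsum,
    integral_add (hi1.const_mul (2*m)) (hi0.const_mul (m^2)), integral_const_mul, integral_const_mul,
    Lodd, Lsq hb, integral_gaussian]
  field_simp
  ring

lemma M0 {b : ℝ} (hb : 0 < b) (m : ℝ) :
    ∫ x : ℝ, Real.exp (-b * (m - x)^2) = Real.sqrt (π / b) := by
  have h : (fun x : ℝ => Real.exp (-b * (m - x)^2))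
      = fun x => Real.exp (-b * (x - m)^2) := by
    funext x; rw [show (m - x)^2 = (x - m)^2 by ring]
  rw [h, L0, integral_gaussian]

section core
variable {ν : ℕ} (σ : ℝ) (μ : EuclideanSpace ℝ (Fin ν)) (k l : Fin ν)

/-- the per-coordinate factor -/
noncomputable def hfun (b : ℝ) (μ : EuclideanSpace ℝ (Fin ν)) (k l i : Fin ν) : ℝ → ℝ :=
  fun t => ((if i = k then t else 1) * (if i = l then t else 1)) * Real.exp (-b * (μ i - t)^2)

lemma hfun_integrable {b : ℝ} (hb : 0 < b) (i : Fin ν) :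
    Integrable (hfun b μ k l i) := by
  unfold hfun
  by_cases hik : i = k <;> by_cases hil : i = l
  · have h : (fun t : ℝ => ((if i = k then t else 1) * (if i = l then t else 1)) * Real.exp (-b * (μ i - t)^2))
        = fun t => ((0:ℝ) + 0 * t + 1 * t^2) * Real.exp (-b * (μ i - t)^2) := by
      funext t; simp only [if_pos hik, if_pos hil]; ring
    rw [h]; exact Ipoly hb (μ i) 0 0 1
  · have h : (fun t : ℝ => ((if i = k then t else 1) * (if i = l then t else 1)) * Real.exp (-b * (μ i - t)^2))
        = fun t => ((0:ℝ) + 1 * t + 0 * t^2) * Real.exp (-b * (μ i - t)^2) := by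
      funext t; simp only [if_pos hik, if_neg hil]; ring
    rw [h]; exact Ipoly hb (μ i) 0 1 0
  · have h : (fun t : ℝ => ((if i = k then t else 1) * (if i = l then t else 1)) * Real.exp (-b * (μ i - t)^2))
        = fun t => ((0:ℝ) + 1 * t + 0 * t^2) * Real.exp (-b * (μ i - t)^2) := by
      funext t; simp only [if_neg hik, if_pos hil]; ring
    rw [h]; exact Ipoly hb (μ i) 0 1 0
  · have h : (fun t : ℝ => ((if i = k then t else 1) * (if i = l then t else 1)) * Real.exp (-b * (μ i - t)^2))
        = fun t => Real.exp (-b * (μ i - t)^2) := by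
      funext t; simp only [if_neg hik, if_neg hil]; ring
    rw [h]; exact I0 hb (μ i)

lemma hfun_integral {b : ℝ} (hb : 0 < b) (i : Fin ν) :
    ∫ t : ℝ, hfun b μ k l i t = Real.sqrt (π / b) *
      (if i = k then (if i = l then (μ i)^2 + 1/(2*b) else μ i)
        else (if i = l then μ i else 1)) := by
  unfold hfun
  by_cases hik : i = k <;> by_cases hil : i = l
  · have h : (fun t : ℝ => ((if i = k then t else 1) * (if i = l then t else 1)) * Real.exp (-b * (μ i - t)^2))
        = fun t => t^2 * Real.exp (-b * (μ i - t)^2) := by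
      funext t; simp only [if_pos hik, if_pos hil]; ring
    rw [h, M2 hb, if_pos hik, if_pos hil]; ring
  · have h : (fun t : ℝ => ((if i = k then t else 1) * (if i = l then t else 1)) * Real.exp (-b * (μ i - t)^2))
        = fun t => t * Real.exp (-b * (μ i - t)^2) := by
      funext t; simp only [if_pos hik, if_neg hil]; ring
    rw [h, M1 hb, if_pos hik, if_neg hil]; ring
  · have h : (fun t : ℝ => ((if i = k then t else 1) * (if i = l then t else 1)) * Real.exp (-b * (μ i - t)^2))
        = fun t => t * Real.exp (-b * (μ i - t)^2) := by
      funext t; simp only [if_neg hik, if_pos hil]; ring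
    rw [h, M1 hb, if_neg hik, if_pos hil]; ring
  · have h : (fun t : ℝ => ((if i = k then t else 1) * (if i = l then t else 1)) * Real.exp (-b * (μ i - t)^2))
        = fun t => Real.exp (-b * (μ i - t)^2) := by
      funext t; simp only [if_neg hik, if_neg hil]; ring
    rw [h, M0 hb, if_neg hik, if_neg hil]; ring
end core


section core
variable {ν : ℕ}

lemma prod_hfun (b : ℝ) (μ : EuclideanSpace ℝ (Fin ν)) (k l : Fin ν) (x : Fin ν → ℝ) :
    (∏ i, hfun b μ k l i (x i)) = (x k * x l) * Real.exp (-b * ∑ i, (μ i - x i)^2) := by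
  unfold hfun
  rw [Finset.prod_mul_distrib, Finset.prod_mul_distrib,
    Finset.prod_ite_eq' Finset.univ k (fun i => x i),
    Finset.prod_ite_eq' Finset.univ l (fun i => x i), ← Real.exp_sum]
  have h : ∑ i, -b * (μ i - x i)^2 = -b * ∑ i, (μ i - x i)^2 := by rw [Finset.mul_sum]
  rw [h]
  simp

lemma norm_sq_eq (μ η : EuclideanSpace ℝ (Fin ν)) :
    ‖μ - η‖^2 = ∑ i, (μ i - η i)^2 := by
  rw [EuclideanSpace.norm_eq, Real.sq_sqrt (by positivity)]
  congr 1; funext i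
  simp [sq_abs]

lemma integrand_eq (σ : ℝ) (hσ : 0 < σ) (μ : EuclideanSpace ℝ (Fin ν)) (k l : Fin ν)
    (η : EuclideanSpace ℝ (Fin ν)) :
    Real.exp (-‖μ - η‖^2 / (2*σ^2)) * (η k * η l)
      = ∏ i, hfun (1/(2*σ^2)) μ k l i (η i) := by
  rw [prod_hfun]
  rw [norm_sq_eq]
  have : -(∑ i, (μ i - η i)^2) / (2*σ^2) = -(1/(2*σ^2)) * ∑ i, (μ i - η i)^2 := by
    field_simp
  rw [this]
  exact mul_comm _ _

lemma core_integral (σ : ℝ) (hσ : 0 < σ) (μ : EuclideanSpace ℝ (Fin ν)) (k l : Fin ν) :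
    (∫ η : EuclideanSpace ℝ (Fin ν), Real.exp (-‖μ - η‖^2 / (2*σ^2)) * (η k * η l))
      = (Real.sqrt (2*π*σ^2))^ν * (μ k * μ l + if k = l then σ^2 else 0) := by
  set b := 1/(2*σ^2) with hbdef
  have hb : 0 < b := by positivity
  have e2 : MeasurePreserving (⇑(MeasurableEquiv.toLp 2 (Fin ν → ℝ)).symm.symm) volume volume :=
    (EuclideanSpace.volume_preserving_symm_measurableEquiv_toLp (Fin ν)).symm _
  rw [← e2.integral_comp' (fun η => Real.exp (-‖μ - η‖^2 / (2*σ^2)) * (η k * η l))]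
  have hcoord : ∀ (x : Fin ν → ℝ) (i : Fin ν),
      ((MeasurableEquiv.toLp 2 (Fin ν → ℝ)).symm.symm x) i = x i := fun x i => rfl
  have h1 : ∀ x : Fin ν → ℝ,
      Real.exp (-‖μ - (MeasurableEquiv.toLp 2 (Fin ν → ℝ)).symm.symm x‖^2 / (2*σ^2)) *
        (((MeasurableEquiv.toLp 2 (Fin ν → ℝ)).symm.symm x) k *
          ((MeasurableEquiv.toLp 2 (Fin ν → ℝ)).symm.symm x) l)
      = ∏ i, hfun b μ k l i (x i) := by
    intro x
    rw [integrand_eq σ hσ μ k l]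
    congr 1
  rw [integral_congr_ae (Filter.Eventually.of_forall h1)]
  rw [MeasureTheory.integral_fintype_prod_volume_eq_prod (hfun b μ k l)]
  have h2 : ∀ i, (∫ t : ℝ, hfun b μ k l i t) = Real.sqrt (2*π*σ^2) *
      (if i = k then (if i = l then (μ i)^2 + σ^2 else μ i)
        else (if i = l then μ i else 1)) := by
    intro i
    rw [hfun_integral μ k l hb i]
    have hs : π / b = 2*π*σ^2 := by rw [hbdef]; field_simp
    have hv : 1/(2*b) = σ^2 := by rw [hbdef]; field_simp
    rw [hs, hv]
  rw [Finset.prod_congr rfl (fun i _ => h2 i), Finset.prod_mul_distrib, Finset.prod_const,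
    Finset.card_univ, Fintype.card_fin]
  congr 1
  by_cases hkl : k = l
  · subst hkl
    have h3 : ∀ i : Fin ν, (if i = k then (if i = k then (μ i)^2 + σ^2 else μ i)
        else (if i = k then μ i else 1)) = if i = k then (μ k)^2 + σ^2 else 1 := by
      intro i; by_cases hik : i = k
      · subst hik; simp
      · simp [hik]
    rw [Finset.prod_congr rfl (fun i _ => h3 i), Finset.prod_ite_eq' Finset.univ k
      (fun _ => (μ k)^2 + σ^2)]
    simp [sq]
  · have h3 : ∀ i : Fin ν, (if i = k then (if i = l then (μ i)^2 + σ^2 else μ i)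
        else (if i = l then μ i else 1))
        = (if i = k then μ k else 1) * (if i = l then μ l else 1) := by
      intro i
      by_cases hik : i = k
      · subst hik; simp [hkl]
      · by_cases hil : i = l
        · subst hil; simp [hik]
        · simp [hik, hil]
    rw [Finset.prod_congr rfl (fun i _ => h3 i), Finset.prod_mul_distrib,
      Finset.prod_ite_eq' Finset.univ k (fun _ => μ k),
      Finset.prod_ite_eq' Finset.univ l (fun _ => μ l)]
    simp [hkl]

lemma core_integrable (σ : ℝ) (hσ : 0 < σ) (μ : EuclideanSpace ℝ (Fin ν)) (k l : Fin ν) :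
    Integrable (fun η : EuclideanSpace ℝ (Fin ν) =>
      Real.exp (-‖μ - η‖^2 / (2*σ^2)) * (η k * η l)) := by
  set b := 1/(2*σ^2) with hbdef
  have hb : 0 < b := by positivity
  have e2 : MeasurePreserving (⇑(MeasurableEquiv.toLp 2 (Fin ν → ℝ)).symm.symm) volume volume :=
    (EuclideanSpace.volume_preserving_symm_measurableEquiv_toLp (Fin ν)).symm _
  rw [← e2.integrable_comp_emb
    (MeasurableEquiv.toLp 2 (Fin ν → ℝ)).symm.symm.measurableEmbedding]
  have hprod : Integrable (fun x : Fin ν → ℝ => ∏ i, hfun b μ k l i (x i)) :=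
    Integrable.fintype_prod (fun i => hfun_integrable μ k l hb i)
  refine hprod.congr (Filter.Eventually.of_forall fun x => ?_)
  simp only [Function.comp]
  exact (integrand_eq σ hσ μ k l _).symm


/-- with the Silverman bandwidth s_ν and the modified bandwidth
ŝ_ν, if the data are centered with unit empirical covariance, then the
second-moment matrix of the modified Gaussian kernel density estimate is the
identity (stated entrywise). -/
theorem modified_gaussian_kde_unit_second_moment
    (ν N : ℕ) (hN : 2 ≤ N) (hν : 1 ≤ ν)
    (s shat : ℝ)
    (hsdef : s = (4 / ((N : ℝ) * (2 + (ν : ℝ)))) ^ ((1 : ℝ) / ((ν : ℝ) + 4)))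
    (hshatdef : shat = s / Real.sqrt (s ^ 2 + ((N : ℝ) - 1) / N))
    (ηd : Fin N → EuclideanSpace ℝ (Fin ν))
    (hmean : (1 / (N : ℝ)) • ∑ j, ηd j = 0)
    (hcov : (1 / ((N : ℝ) - 1)) •
      ∑ j, vecMulVec (fun k => ηd j k) (fun k => ηd j k) =
        (1 : Matrix (Fin ν) (Fin ν) ℝ))
    (p : EuclideanSpace ℝ (Fin ν) → ℝ)
    (hp : ∀ η, p η = (1 / (N : ℝ)) * ∑ j,
      (2 * π * shat ^ 2) ^ (-(ν : ℝ) / 2) *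
        Real.exp (-‖(shat / s) • ηd j - η‖ ^ 2 / (2 * shat ^ 2))) :
    ∀ k l, (∫ η, p η * (η k * η l)) = (1 : Matrix (Fin ν) (Fin ν) ℝ) k l := by
  intro k l
  -- positivity facts
  have hNpos : (0:ℝ) < N := by
    have : 0 < N := by omega
    exact_mod_cast this
  have hbase : (0:ℝ) < 4 / ((N : ℝ) * (2 + (ν : ℝ))) := by
    apply div_pos (by norm_num)
    apply mul_pos hNpos
    positivity
  have hs0 : 0 < s := hsdef ▸ Real.rpow_pos_of_pos hbase _
  have hN1 : (0:ℝ) ≤ (N:ℝ) - 1 := by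
    have : (1:ℝ) ≤ (N:ℝ) := by exact_mod_cast (by omega : 1 ≤ N)
    linarith
  have hT : 0 < s^2 + ((N:ℝ)-1)/N :=
    add_pos_of_pos_of_nonneg (pow_pos hs0 2) (div_nonneg hN1 hNpos.le)
  have hshat0 : 0 < shat := hshatdef ▸ div_pos hs0 (Real.sqrt_pos.mpr hT)
  set c : ℝ := (2 * π * shat ^ 2) ^ (-(ν : ℝ) / 2) with hc
  set S : ℝ := Real.sqrt (2*π*shat^2) with hS
  -- the normalization constant
  have hA : (0:ℝ) < 2*π*shat^2 := by positivity
  have hcs : c * S^ν = 1 := by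
    rw [hc, hS, Real.sqrt_eq_rpow, ← Real.rpow_natCast ((2*π*shat^2) ^ ((1:ℝ)/2)) ν,
      ← Real.rpow_mul hA.le, ← Real.rpow_add hA]
    rw [show -(ν:ℝ)/2 + 1/2*(ν:ℕ) = 0 by push_cast; ring]
    exact Real.rpow_zero _
  -- rewrite integrand as a finite sum
  have hpt : ∀ η : EuclideanSpace ℝ (Fin ν), p η * (η k * η l) = ∑ j, ((1:ℝ)/N) *
      (c * (Real.exp (-‖(shat/s) • ηd j - η‖^2 / (2*shat^2)) * (η k * η l))) := by
    intro η
    rw [hp η, Finset.mul_sum, Finset.sum_mul]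
    exact Finset.sum_congr rfl fun j _ => by ring
  rw [integral_congr_ae (Filter.Eventually.of_forall hpt)]
  rw [integral_finset_sum Finset.univ (fun j _ =>
    (((core_integrable shat hshat0 ((shat/s) • ηd j) k l).const_mul c).const_mul ((1:ℝ)/N)))]
  have hval : ∀ j : Fin N, (∫ η : EuclideanSpace ℝ (Fin ν), ((1:ℝ)/N) *
      (c * (Real.exp (-‖(shat/s) • ηd j - η‖^2 / (2*shat^2)) * (η k * η l))))
      = ((1:ℝ)/N) * ((((shat/s) • ηd j) k * (((shat/s) • ηd j) l)) +
          (if k = l then shat^2 else 0)) := by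
    intro j
    rw [integral_const_mul, integral_const_mul, core_integral shat hshat0 ((shat/s) • ηd j) k l]
    rw [show ∀ X : ℝ, (1:ℝ)/N * (c * (S^ν * X)) = (c * S^ν) * ((1/N) * X) from fun X => by ring,
      hcs, one_mul]
  rw [Finset.sum_congr rfl (fun j _ => hval j)]
  simp only [PiLp.smul_apply, smul_eq_mul]
  -- covariance entry
  have hcove := congrFun (congrFun hcov k) l
  simp only [Matrix.smul_apply, Matrix.sum_apply, Matrix.vecMulVec_apply, smul_eq_mul] at hcove
  have hNm1 : ((N:ℝ) - 1) ≠ 0 := by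
    have : (2:ℝ) ≤ (N:ℝ) := by exact_mod_cast hN
    linarith
  have hsum : ∑ j, ηd j k * ηd j l = ((N:ℝ)-1) * ((1 : Matrix (Fin ν) (Fin ν) ℝ) k l) := by
    rw [← hcove]
    field_simp
  -- shat facts
  have hshat2 : shat^2 = s^2 / (s^2 + ((N:ℝ)-1)/N) := by
    rw [hshatdef, div_pow, Real.sq_sqrt hT.le]
  have hkey : shat^2 * ((N:ℝ)-1) + (N:ℝ)*(shat^2*s^2) = (N:ℝ)*s^2 := by
    rw [hshat2]
    field_simp
    ring
  -- collect the sum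
  have step : ∑ j : Fin N, ((1:ℝ)/N) * ((shat/s * ηd j k) * (shat/s * ηd j l) +
      (if k = l then shat^2 else 0))
      = ((1:ℝ)/N) * ((shat/s)^2 * (∑ j, ηd j k * ηd j l) +
          (N:ℝ) * (if k = l then shat^2 else 0)) := by
    rw [← Finset.mul_sum]
    congr 1
    rw [Finset.sum_add_distrib, Finset.sum_const, Finset.card_univ, Fintype.card_fin,
      Finset.mul_sum]
    congr 1
    · exact Finset.sum_congr rfl fun j _ => by ring
    · simp [nsmul_eq_mul]
  rw [step, hsum]
  by_cases hkl : k = l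
  · subst hkl
    rw [Matrix.one_apply_eq, if_pos rfl, mul_one]
    field_simp
    nlinarith [hkey]
  · rw [Matrix.one_apply_ne hkl, if_neg hkl]
    simp
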